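/- Let d ≥ 1, let θ ∈ ℝ^d with ‖θ‖ = 1, and let t ∈ ℝ. Set u = t/√(t² + 1) (equivalently, u = sign(t)·√(t²/(t²+1))) and let s ∈ ℝ^{d+1} be the vector whose first d coordinates form √(1 − u²)·θ and whose last coordinate is u. Then s ∈ 𝕊^d, and for every x ∈ ℝ^d, ⟨x, θ⟩ = t if and only if ⟨ψ(x), s⟩ = u, where ψ(x) ∈ ℝ^{d+1} is the inverse stereographic map with first d coordinates (1 − u')·x and last coordinate u' = (‖x‖² − 1)/(‖x‖² + 1). In other words, every hyperplane { x ∈ ℝ^d : ⟨x, θ⟩ = t } is the stereographic image of a subsphere ζ₁^s = { s' ∈ 𝕊^d : ⟨s', s⟩ = s_{d+1} }. -/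

import Mathlib

open Real
open scoped RealInnerProductSpace

noncomputable section

/-- The first `d` coordinates of a point of `ℝ^{d+1}`, i.e. `s[1:d]`. -/
def stereoProj {d : ℕ} (s : EuclideanSpace ℝ (Fin (d + 1))) : EuclideanSpace ℝ (Fin d) :=
  WithLp.toLp 2 (fun i => s (Fin.castSucc i))

/-- The stereographic projection `φ(s) = s[1:d] / (1 - s_{d+1})`. -/
def stereo {d : ℕ} (s : EuclideanSpace ℝ (Fin (d + 1))) : EuclideanSpace ℝ (Fin d) :=
  (1 - s (Fin.last d))⁻¹ • stereoProj s

open Classical in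
/-- The map `h₁(x) = arccos((1 - ‖x‖²)/(1 + ‖x‖²)) • x/‖x‖` for `x ≠ 0`, `h₁(0) = 0`. -/
def h1 {d : ℕ} (x : EuclideanSpace ℝ (Fin d)) : EuclideanSpace ℝ (Fin d) :=
  if x = 0 then 0 else Real.arccos ((1 - ‖x‖ ^ 2) / (1 + ‖x‖ ^ 2)) • ‖x‖⁻¹ • x

/-- The north pole `s_n = (0, …, 0, 1)` of `𝕊^d ⊂ ℝ^{d+1}`. -/
def northPole (d : ℕ) : EuclideanSpace ℝ (Fin (d + 1)) :=
  EuclideanSpace.single (Fin.last d) 1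

/-- The south pole `s₀ = (0, …, 0, -1)` of `𝕊^d ⊂ ℝ^{d+1}`. -/
def southPole (d : ℕ) : EuclideanSpace ℝ (Fin (d + 1)) :=
  EuclideanSpace.single (Fin.last d) (-1)

end

/-- The point of `ℝ^{d+1}` whose first `d` coordinates form `x` and whose last
coordinate is `u`. -/
def append1 {d : ℕ} (x : EuclideanSpace ℝ (Fin d)) (u : ℝ) :
    EuclideanSpace ℝ (Fin (d + 1)) :=
  WithLp.toLp 2 (Fin.snoc (α := fun _ => ℝ) x.ofLp u)

/-- The inverse stereographic map `ψ(x) = ((1 - u')·x, u')` with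
`u' = (‖x‖² - 1)/(‖x‖² + 1)`. -/
noncomputable def invStereo {d : ℕ} (x : EuclideanSpace ℝ (Fin d)) :
    EuclideanSpace ℝ (Fin (d + 1)) :=
  append1 ((1 - (‖x‖ ^ 2 - 1) / (‖x‖ ^ 2 + 1)) • x) ((‖x‖ ^ 2 - 1) / (‖x‖ ^ 2 + 1))

/-- given a unit vector `θ ∈ ℝ^d` and `t ∈ ℝ`, with `u = t/√(t² + 1)` and
`s = (√(1 - u²)·θ, u)`, the point `s` is on `𝕊^d` and for every `x ∈ ℝ^d`,
`⟨x, θ⟩ = t ↔ ⟨ψ(x), s⟩ = u`; thus every hyperplane `{x : ⟨x, θ⟩ = t}` is the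
stereographic image of the subsphere `ζ₁^s = {s' ∈ 𝕊^d : ⟨s', s⟩ = s_{d+1}}`. -/

lemma inner_append1 {d : ℕ} (a c : EuclideanSpace ℝ (Fin d)) (b e : ℝ) :
    ⟪append1 a b, append1 c e⟫ = ⟪a, c⟫ + b * e := by
  simp only [PiLp.inner_apply, RCLike.inner_apply, conj_trivial, append1, WithLp.ofLp_toLp,
    Fin.sum_univ_castSucc, Fin.snoc_castSucc, Fin.snoc_last]
  ring

theorem stmt11 {d : ℕ} (hd : 1 ≤ d) (θ : EuclideanSpace ℝ (Fin d)) (hθ : ‖θ‖ = 1) (t : ℝ)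
    (u : ℝ) (hu : u = t / Real.sqrt (t ^ 2 + 1))
    (s : EuclideanSpace ℝ (Fin (d + 1)))
    (hsdef : s = append1 (Real.sqrt (1 - u ^ 2) • θ) u) :
    ‖s‖ = 1 ∧ ∀ x : EuclideanSpace ℝ (Fin d), ⟪x, θ⟫ = t ↔ ⟪invStereo x, s⟫ = u := by
  have hq : (0:ℝ) < Real.sqrt (t ^ 2 + 1) := Real.sqrt_pos.2 (by positivity)
  have hq2 : Real.sqrt (t ^ 2 + 1) ^ 2 = t ^ 2 + 1 := Real.sq_sqrt (by positivity)
  have hu2 : 1 - u ^ 2 = 1 / (t ^ 2 + 1) := by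
    rw [hu]; field_simp
    rw [hq2]; ring
  have hsq : Real.sqrt (1 - u ^ 2) = (Real.sqrt (t ^ 2 + 1))⁻¹ := by
    rw [hu2, one_div, Real.sqrt_inv]
  have hsq2 : Real.sqrt (1 - u ^ 2) ^ 2 = 1 - u ^ 2 := by
    rw [hu2] at *; exact Real.sq_sqrt (by positivity)
  constructor
  · have h1 : ⟪s, s⟫ = 1 := by
      rw [hsdef, inner_append1, real_inner_smul_left, real_inner_smul_right,
        real_inner_self_eq_norm_sq, hθ]
      nlinarith [hsq2]
    have := real_inner_self_eq_norm_sq s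
    nlinarith [norm_nonneg s, this.symm.trans h1]
  · intro x
    have hn : (0:ℝ) < ‖x‖ ^ 2 + 1 := by positivity
    rw [hsdef, invStereo, inner_append1, real_inner_smul_left, real_inner_smul_right, hsq, hu]
    constructor
    · intro h; rw [h]; field_simp; ring
    · intro h
      field_simp at h
      simp only [PiLp.inner_apply, RCLike.inner_apply, conj_trivial] at h ⊢
      nlinarith [hq]
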